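/- Fix q ≥ 0 and r > 0. Define κ : (0,∞) → ℝ by κ(Z) = [(X² + XY − 2Y²)Z² + (−2X²Y + XY²)Z + X²Y²] / (2·X^{3/2}·Y^{3/2}·Z^{3/2}), where X = Z + q + r and Y = Z + r. Then κ(Z) → +∞ as Z → 0⁺; in particular κ is unbounded on (0,∞). -/
import Mathlib


noncomputable section

/-- The sectional curvature `κ_{q,r}(V₀,V₁)` on the leaf `N_{q,r}`, as a function of
`Z = ‖a₃‖²`, with `X = Z + q + r` and `Y = Z + r`:
`κ(Z) = [(X² + XY − 2Y²)Z² + (−2X²Y + XY²)Z + X²Y²] / (2·(√X)³·(√Y)³·(√Z)³)`. -/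
def kappa (q r Z : ℝ) : ℝ :=
  (((Z + q + r) ^ 2 + (Z + q + r) * (Z + r) - 2 * (Z + r) ^ 2) * Z ^ 2 +
      ((-2) * (Z + q + r) ^ 2 * (Z + r) + (Z + q + r) * (Z + r) ^ 2) * Z +
      (Z + q + r) ^ 2 * (Z + r) ^ 2) /
    (2 * Real.sqrt (Z + q + r) ^ 3 * Real.sqrt (Z + r) ^ 3 * Real.sqrt Z ^ 3)

/-- On a type-2 leaf (`r > 0`), the sectional curvature `κ(V₀,V₁)` blows up as `Z → 0⁺`;
in particular it is unbounded on `(0,∞)`. -/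
theorem kappa_tendsto_atTop (q r : ℝ) (hq : 0 ≤ q) (hr : 0 < r) :
    Filter.Tendsto (kappa q r) (nhdsWithin 0 (Set.Ioi 0)) Filter.atTop ∧
    ¬ BddAbove (kappa q r '' Set.Ioi 0) := by
  set f : ℝ → ℝ := fun Z =>
    ((Z + q + r) ^ 2 + (Z + q + r) * (Z + r) - 2 * (Z + r) ^ 2) * Z ^ 2 +
      ((-2) * (Z + q + r) ^ 2 * (Z + r) + (Z + q + r) * (Z + r) ^ 2) * Z +
      (Z + q + r) ^ 2 * (Z + r) ^ 2 with hf
  set g : ℝ → ℝ := fun Z =>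
    2 * Real.sqrt (Z + q + r) ^ 3 * Real.sqrt (Z + r) ^ 3 * Real.sqrt Z ^ 3 with hg
  have hfc : Continuous f := by fun_prop
  have hgc : Continuous g := by
    apply Continuous.mul
    apply Continuous.mul
    apply Continuous.mul continuous_const
    · exact ((Real.continuous_sqrt.comp (by fun_prop)).pow 3)
    · exact ((Real.continuous_sqrt.comp (by fun_prop)).pow 3)
    · exact (Real.continuous_sqrt.pow 3)
  have hf0 : f 0 = (q + r) ^ 2 * r ^ 2 := by simp [hf]
  have hf0pos : 0 < f 0 := by
    rw [hf0]; positivity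
  have hg0 : g 0 = 0 := by simp [hg]
  have hgpos : ∀ Z ∈ Set.Ioi (0 : ℝ), 0 < g Z := by
    intro Z hZ
    simp only [Set.mem_Ioi] at hZ
    have h1 : 0 < Real.sqrt (Z + q + r) := Real.sqrt_pos.2 (by linarith)
    have h2 : 0 < Real.sqrt (Z + r) := Real.sqrt_pos.2 (by linarith)
    have h3 : 0 < Real.sqrt Z := Real.sqrt_pos.2 hZ
    positivity
  have hgt : Filter.Tendsto g (nhdsWithin 0 (Set.Ioi 0)) (nhdsWithin 0 (Set.Ioi 0)) := by
    apply tendsto_nhdsWithin_of_tendsto_nhds_of_eventually_within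
    · have := hgc.tendsto 0
      rw [hg0] at this
      exact this.mono_left nhdsWithin_le_nhds
    · exact Filter.eventually_inf_principal.2 (Filter.Eventually.of_forall hgpos)
  have hginv : Filter.Tendsto (fun Z => (g Z)⁻¹) (nhdsWithin 0 (Set.Ioi 0)) Filter.atTop :=
    tendsto_inv_nhdsGT_zero.comp hgt
  have hft : Filter.Tendsto f (nhdsWithin 0 (Set.Ioi 0)) (nhds (f 0)) :=
    (hfc.tendsto 0).mono_left nhdsWithin_le_nhds
  have hmain : Filter.Tendsto (kappa q r) (nhdsWithin 0 (Set.Ioi 0)) Filter.atTop := by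
    have : Filter.Tendsto (fun Z => f Z * (g Z)⁻¹) (nhdsWithin 0 (Set.Ioi 0)) Filter.atTop :=
      Filter.Tendsto.pos_mul_atTop hf0pos hft hginv
    refine this.congr fun Z => ?_
    simp [kappa, hf, hg, div_eq_mul_inv]
  refine ⟨hmain, ?_⟩
  rintro ⟨M, hM⟩
  have : ∀ᶠ Z in nhdsWithin 0 (Set.Ioi 0), M + 1 ≤ kappa q r Z :=
    hmain.eventually_ge_atTop (M + 1)
  have hne : (nhdsWithin (0:ℝ) (Set.Ioi 0)).NeBot := by infer_instance
  obtain ⟨Z, hZ1, hZ2⟩ := (this.and self_mem_nhdsWithin).exists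
  have := hM ⟨Z, hZ2, rfl⟩
  linarith
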